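/- For Haar-type wavelet filters h_j(l/p^{s+1}) = ∑_{ν=1}^{p-1} α^j_{ν,k} e^{2πiνr/p} (l = k + r·p^s), one has for every μ > 0 the identity ∑_{l=1}^{p^{s+1}-1} |l/p^{s+1}|_p^μ · h_j(l/p^{s+1}) = -p^μ · ∑_{ν=1}^{p-1} α^j_{ν,0}. Consequently, the filter h_j has discrete p-vanishing moments of all orders if and only if h_j(0) = ∑_{ν=1}^{p-1} α^j_{ν,0} = 0. -/

import Mathlib

open Finset

private lemma expsum (p : ℕ) (hp : 0 < p) (ν : ℕ) (h1 : 1 ≤ ν) (h2 : ν < p) :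
    ∑ r ∈ Finset.range p, Complex.exp (2 * Real.pi * Complex.I * ν * r / p) = 0 := by
  have hp0 : (p : ℂ) ≠ 0 := Nat.cast_ne_zero.2 hp.ne'
  set z : ℂ := Complex.exp (2 * Real.pi * Complex.I * ν / p) with hz
  have hexp : ∀ r : ℕ, Complex.exp (2 * Real.pi * Complex.I * ν * r / p) = z ^ r := by
    intro r
    rw [hz, ← Complex.exp_nat_mul]
    ring_nf
  have hzp : z ^ p = 1 := by
    rw [hz, ← Complex.exp_nat_mul]
    have he : (p : ℂ) * (2 * Real.pi * Complex.I * ν / p) = (ν : ℤ) * (2 * Real.pi * Complex.I) := by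
      field_simp
      norm_cast
    rw [he, Complex.exp_int_mul_two_pi_mul_I]
  have hz1 : z ≠ 1 := by
    intro hcon
    rw [hz, Complex.exp_eq_one_iff] at hcon
    obtain ⟨n, hn⟩ := hcon
    have h2pi : (2 * Real.pi * Complex.I : ℂ) ≠ 0 := by
      simp [Real.pi_ne_zero, Complex.I_ne_zero]
    have hν : (ν : ℂ) = n * p := by
      field_simp at hn
      have : (2 * Real.pi * Complex.I : ℂ) * ν = (2 * Real.pi * Complex.I) * (n * p) := by
        rw [hn]; ring
      exact mul_left_cancel₀ h2pi this
    have hνz : (ν : ℤ) = n * p := by exact_mod_cast hν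
    have hdvd : (p : ℤ) ∣ (ν : ℤ) := ⟨n, by linarith [hνz]⟩
    have := Int.le_of_dvd (by exact_mod_cast h1) hdvd
    omega
  calc ∑ r ∈ range p, Complex.exp (2 * Real.pi * Complex.I * ν * r / p)
      = ∑ r ∈ range p, z ^ r := by simp only [hexp]
    _ = (z ^ p - 1) / (z - 1) := geom_sum_eq hz1 p
    _ = 0 := by rw [hzp]; simp

private lemma expsum' (p : ℕ) (hp : 0 < p) (ν : ℕ) (h1 : 1 ≤ ν) (h2 : ν < p) :
    ∑ r ∈ Finset.Ico 1 p, Complex.exp (2 * Real.pi * Complex.I * ν * r / p) = -1 := by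
  have h0 := expsum p hp ν h1 h2
  rw [range_eq_Ico, Finset.sum_eq_sum_Ico_succ_bot hp] at h0
  norm_num at h0
  linear_combination h0

private lemma reindex (N p : ℕ) (f : ℕ → ℂ) :
    ∑ l ∈ Finset.range (N * p), f l
      = ∑ r ∈ Finset.range p, ∑ k ∈ Finset.range N, f (k + r * N) := by
  induction p with
  | zero => simp
  | succ q ih =>
      rw [Finset.sum_range_succ, ← ih, Nat.mul_succ, Finset.sum_range_add]
      congr 1
      exact Finset.sum_congr rfl fun k _ => by rw [Nat.add_comm, Nat.mul_comm]

private lemma norm_unit (p : ℕ) [Fact p.Prime] (r : ℕ) (h1 : 1 ≤ r) (h2 : r < p) :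
    ‖((r : ℕ) : ℚ_[p])‖ = 1 := by
  have hcast : ((r : ℕ) : ℚ_[p]) = ((r : ℤ) : ℚ_[p]) := by push_cast; ring
  rw [hcast]
  have hle := Padic.norm_int_le_one (p := p) (r : ℤ)
  have hnd : ¬ ((p : ℤ) ∣ (r : ℤ)) := by
    intro hd
    have := Int.le_of_dvd (by exact_mod_cast h1) hd
    omega
  have hnlt := (Padic.norm_intCast_lt_one_iff (p := p) (k := (r : ℤ))).not.2 hnd
  exact le_antisymm hle (not_lt.1 hnlt)

private lemma norm_stable (p : ℕ) [Fact p.Prime] (s k r : ℕ) (hk1 : 1 ≤ k) (hk : k < p ^ s) :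
    ‖((k + r * p ^ s : ℕ) : ℚ_[p])‖ = ‖((k : ℕ) : ℚ_[p])‖ := by
  have hp := Fact.out (p := p.Prime)
  have hklow : ¬ ‖((k : ℕ) : ℚ_[p])‖ ≤ (p : ℝ) ^ (-(s : ℤ)) := by
    have hcast : ((k : ℕ) : ℚ_[p]) = ((k : ℤ) : ℚ_[p]) := by push_cast; ring
    rw [hcast, Padic.norm_int_le_pow_iff_dvd]
    intro hdvd
    have := Int.le_of_dvd (by exact_mod_cast hk1) hdvd
    have : (p : ℤ) ^ s ≤ (k : ℤ) := this
    have : p ^ s ≤ k := by exact_mod_cast this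
    omega
  have hrle : ‖((r * p ^ s : ℕ) : ℚ_[p])‖ ≤ (p : ℝ) ^ (-(s : ℤ)) := by
    have hcast : ((r * p ^ s : ℕ) : ℚ_[p]) = ((r : ℕ) : ℚ_[p]) * ((p : ℚ_[p]) ^ s) := by
      push_cast; ring
    rw [hcast, norm_mul, Padic.norm_p_pow]
    have h1 : ‖((r : ℕ) : ℚ_[p])‖ ≤ 1 := by
      have : ((r : ℕ) : ℚ_[p]) = ((r : ℤ) : ℚ_[p]) := by push_cast; ring
      rw [this]; exact Padic.norm_int_le_one _
    have h2 : (0 : ℝ) ≤ (p : ℝ) ^ (-(s : ℤ)) := by positivity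
    calc ‖((r : ℕ) : ℚ_[p])‖ * (p : ℝ) ^ (-(s : ℤ)) ≤ 1 * (p : ℝ) ^ (-(s : ℤ)) :=
          mul_le_mul_of_nonneg_right h1 h2
      _ = (p : ℝ) ^ (-(s : ℤ)) := one_mul _
  have hlt : ‖((r * p ^ s : ℕ) : ℚ_[p])‖ < ‖((k : ℕ) : ℚ_[p])‖ :=
    lt_of_le_of_lt hrle (not_le.1 hklow)
  have hcast : ((k + r * p ^ s : ℕ) : ℚ_[p]) = ((k : ℕ) : ℚ_[p]) + ((r * p ^ s : ℕ) : ℚ_[p]) := by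
    push_cast; ring
  rw [hcast, Padic.add_eq_max_of_ne (ne_of_gt hlt), max_eq_left hlt.le]

private lemma norm_top (p : ℕ) [Fact p.Prime] (s r : ℕ) (h1 : 1 ≤ r) (h2 : r < p) :
    ‖(((r * p ^ s : ℕ) : ℚ_[p]) / (p : ℚ_[p]) ^ (s + 1))‖ = (p : ℝ) := by
  have hp := Fact.out (p := p.Prime)
  have hcast : ((r * p ^ s : ℕ) : ℚ_[p]) = ((r : ℕ) : ℚ_[p]) * ((p : ℚ_[p]) ^ s) := by
    push_cast; ring
  rw [norm_div, hcast, norm_mul, Padic.norm_p_pow, Padic.norm_p_pow,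
    norm_unit p r h1 h2, one_mul]
  have hp0 : (p : ℝ) ≠ 0 := Nat.cast_ne_zero.2 hp.pos.ne'
  rw [← zpow_sub₀ hp0]
  norm_num

private lemma split_zero (n : ℕ) (hn : 0 < n) (g : ℕ → ℂ) :
    ∑ l ∈ Finset.range n, g l = g 0 + ∑ l ∈ Finset.Ico 1 n, g l := by
  rw [Finset.range_eq_Ico, Finset.sum_eq_sum_Ico_succ_bot hn]

theorem stmt12 (p : ℕ) [Fact p.Prime] (s : ℕ) (α : ℕ → ℕ → ℂ) (h : ℕ → ℂ)
    (hh : ∀ r k : ℕ, r < p → k < p ^ s →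
      h (k + r * p ^ s) = ∑ ν ∈ Finset.Ico 1 p,
        α ν k * Complex.exp (2 * Real.pi * Complex.I * ν * r / p)) :
    (∀ μ : ℝ, 0 < μ →
      ∑ l ∈ Finset.Ico 1 (p ^ (s + 1)),
          ((‖((l : ℚ_[p]) / (p : ℚ_[p]) ^ (s + 1))‖ ^ μ : ℝ) : ℂ) * h l
        = -(((p : ℝ) ^ μ : ℝ) : ℂ) * ∑ ν ∈ Finset.Ico 1 p, α ν 0) ∧
    ((∀ μ : ℝ, 0 < μ →
      ∑ l ∈ Finset.Ico 1 (p ^ (s + 1)),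
          ((‖((l : ℚ_[p]) / (p : ℚ_[p]) ^ (s + 1))‖ ^ μ : ℝ) : ℂ) * h l = 0) ↔
      ∑ ν ∈ Finset.Ico 1 p, α ν 0 = 0) := by
  have hp := Fact.out (p := p.Prime)
  have hppos : 0 < p := hp.pos
  have key : ∀ μ : ℝ, 0 < μ →
      ∑ l ∈ Finset.Ico 1 (p ^ (s + 1)),
          ((‖((l : ℚ_[p]) / (p : ℚ_[p]) ^ (s + 1))‖ ^ μ : ℝ) : ℂ) * h l
        = -(((p : ℝ) ^ μ : ℝ) : ℂ) * ∑ ν ∈ Finset.Ico 1 p, α ν 0 := by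
    intro μ hμ
    set f : ℕ → ℂ :=
      fun l => ((‖((l : ℚ_[p]) / (p : ℚ_[p]) ^ (s + 1))‖ ^ μ : ℝ) : ℂ) * h l with hf
    show ∑ l ∈ Finset.Ico 1 (p ^ (s + 1)), f l = _
    have hf0 : f 0 = 0 := by
      simp [hf, Real.zero_rpow hμ.ne']
    have hstep1 : ∑ l ∈ Finset.range (p ^ (s + 1)), f l
        = ∑ l ∈ Finset.Ico 1 (p ^ (s + 1)), f l := by
      rw [split_zero (p ^ (s + 1)) (pow_pos hppos (s + 1)) f, hf0, zero_add]
    rw [← hstep1, show p ^ (s + 1) = p ^ s * p from pow_succ p s, reindex (p ^ s) p f,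
      Finset.sum_comm]
    have hzero : ∀ k ∈ Finset.Ico 1 (p ^ s),
        ∑ r ∈ Finset.range p, f (k + r * p ^ s) = 0 := by
      intro k hk
      rw [Finset.mem_Ico] at hk
      have hfk : ∀ r ∈ Finset.range p, f (k + r * p ^ s)
          = ∑ ν ∈ Finset.Ico 1 p,
              (((‖((k : ℚ_[p]) / (p : ℚ_[p]) ^ (s + 1))‖ ^ μ : ℝ) : ℂ) * α ν k)
                * Complex.exp (2 * Real.pi * Complex.I * ν * r / p) := by
        intro r hr
        rw [Finset.mem_range] at hr
        have hnorm : ‖(((k + r * p ^ s : ℕ) : ℚ_[p])) / (p : ℚ_[p]) ^ (s + 1)‖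
            = ‖((k : ℚ_[p])) / (p : ℚ_[p]) ^ (s + 1)‖ := by
          rw [norm_div, norm_div, norm_stable p s k r hk.1 hk.2]
        simp only [hf]
        rw [hnorm, hh r k hr hk.2, Finset.mul_sum]
        exact Finset.sum_congr rfl fun ν _ => by ring
      rw [Finset.sum_congr rfl hfk, Finset.sum_comm]
      refine Finset.sum_eq_zero fun ν hν => ?_
      rw [Finset.mem_Ico] at hν
      rw [← Finset.mul_sum, expsum p hppos ν hν.1 hν.2, mul_zero]
    rw [split_zero (p ^ s) (pow_pos hppos s), Finset.sum_eq_zero hzero, add_zero]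
    simp only [zero_add]
    rw [split_zero p hppos]
    have hr0 : f (0 * p ^ s) = 0 := by rw [zero_mul, hf0]
    rw [hr0, zero_add]
    have hterm : ∀ r ∈ Finset.Ico 1 p, f (r * p ^ s)
        = ∑ ν ∈ Finset.Ico 1 p, ((((p : ℝ) ^ μ : ℝ) : ℂ) * α ν 0)
            * Complex.exp (2 * Real.pi * Complex.I * ν * r / p) := by
      intro r hr
      rw [Finset.mem_Ico] at hr
      have hnorm : ‖(((r * p ^ s : ℕ) : ℚ_[p])) / (p : ℚ_[p]) ^ (s + 1)‖ = (p : ℝ) :=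
        norm_top p s r hr.1 hr.2
      have hhval : h (r * p ^ s) = ∑ ν ∈ Finset.Ico 1 p,
          α ν 0 * Complex.exp (2 * Real.pi * Complex.I * ν * r / p) := by
        have := hh r 0 hr.2 (pow_pos hppos s)
        rwa [zero_add] at this
      simp only [hf]
      rw [hnorm, hhval, Finset.mul_sum]
      exact Finset.sum_congr rfl fun ν _ => by ring
    rw [Finset.sum_congr rfl hterm, Finset.sum_comm]
    have hfin : ∀ ν ∈ Finset.Ico 1 p,
        ∑ r ∈ Finset.Ico 1 p, ((((p : ℝ) ^ μ : ℝ) : ℂ) * α ν 0)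
            * Complex.exp (2 * Real.pi * Complex.I * ν * r / p)
          = -((((p : ℝ) ^ μ : ℝ) : ℂ) * α ν 0) := by
      intro ν hν
      rw [Finset.mem_Ico] at hν
      rw [← Finset.mul_sum, expsum' p hppos ν hν.1 hν.2]
      ring
    rw [Finset.sum_congr rfl hfin, Finset.mul_sum]
    exact Finset.sum_congr rfl fun ν _ => by ring
  refine ⟨key, ?_, ?_⟩
  · intro hall
    have h1 := key 1 one_pos
    rw [hall 1 one_pos] at h1
    have hc : -((((p : ℝ) ^ (1 : ℝ) : ℝ)) : ℂ) ≠ 0 := by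
      simp only [ne_eq, neg_eq_zero, Complex.ofReal_eq_zero]
      rw [Real.rpow_one]
      exact_mod_cast hppos.ne'
    rcases mul_eq_zero.1 h1.symm with hc' | hS
    · exact absurd hc' hc
    · exact hS
  · intro hS μ hμ
    rw [key μ hμ, hS, mul_zero]
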